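/- Let G be a finite interval graph with clique path K_1, …, K_ℓ. Suppose G has another clique path in which K_ℓ is not one of the two ends; let K_p be the end of this second clique path that lies, within the second clique path, on the opposite side of K_ℓ from K_1 (i.e., the end that becomes disconnected from K_1 when K_ℓ is removed from the second clique path), and let J be the set of indices j such that K_j lies strictly between K_ℓ and K_p in the second clique path. Then the set U = (⋃_{j ∈ {p, p+1, …, ℓ} ∪ J} K_j) \ (K_p ∩ K_ℓ) is a nontrivial module of G; in fact, every vertex v ∈ U satisfies N(v) \ U = K_p ∩ K_ℓ. -/

import Mathlib

/-- `C` is a maximal clique of `G`. -/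
def IsMaximalClique {V : Type} (G : SimpleGraph V) (C : Set V) : Prop :=
  G.IsClique C ∧ ∀ D : Set V, G.IsClique D → C ⊆ D → D = C

/-- A clique path of `G`: a linear ordering `K 0, …, K (last)` of all the maximal cliques
of `G` (each maximal clique occurring exactly once) such that for every vertex `v`, the
maximal cliques containing `v` occur consecutively. -/
def IsCliquePath {V : Type} (G : SimpleGraph V) {m : ℕ} (K : Fin m → Set V) : Prop :=
  Function.Injective K ∧
  (∀ i : Fin m, IsMaximalClique G (K i)) ∧
  (∀ C : Set V, IsMaximalClique G C → ∃ i : Fin m, K i = C) ∧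
  (∀ (v : V) (i j k : Fin m), i ≤ j → j ≤ k → v ∈ K i → v ∈ K k → v ∈ K j)

/-- `U` is a module of `G`: all vertices of `U` have exactly the same neighbors outside
`U`. -/
def IsModule {V : Type} (G : SimpleGraph V) (U : Set V) : Prop :=
  ∀ u ∈ U, ∀ w ∈ U, ∀ x : V, x ∉ U → (G.Adj x u ↔ G.Adj x w)

/-- Every clique of a finite graph extends to a maximal clique. -/
lemma exists_maximal_clique {V : Type} [Fintype V] (G : SimpleGraph V) (C : Set V)
    (hC : G.IsClique C) : ∃ D, IsMaximalClique G D ∧ C ⊆ D := by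
  classical
  have hfin : {D : Set V | G.IsClique D ∧ C ⊆ D}.Finite := Set.toFinite _
  obtain ⟨D, hD, hDmax⟩ :=
    Set.Finite.exists_maximalFor id {D : Set V | G.IsClique D ∧ C ⊆ D} hfin
      ⟨C, hC, subset_rfl⟩
  refine ⟨D, ⟨hD.1, fun E hE hDE => ?_⟩, hD.2⟩
  exact Set.Subset.antisymm (hDmax ⟨hE, hD.2.trans hDE⟩ hDE) hDE

theorem nontrivial_module_of_two_clique_paths
    {V : Type} [Fintype V] (G : SimpleGraph V) (ℓ : ℕ)
    (K K' : Fin (ℓ + 1) → Set V)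
    (hK : IsCliquePath G K) (hK' : IsCliquePath G K')
    (m m₁ e p : Fin (ℓ + 1))
    (hm : K' m = K (Fin.last ℓ)) (hm0 : m ≠ 0) (hml : m ≠ Fin.last ℓ)
    (hm₁ : K' m₁ = K 0)
    (hside : (m₁ < m ∧ e = Fin.last ℓ) ∨ (m < m₁ ∧ e = 0))
    (hp : K p = K' e) :
    let J : Set (Fin (ℓ + 1)) :=
      {j | ∃ i : Fin (ℓ + 1), K' i = K j ∧ ((m < i ∧ i < e) ∨ (e < i ∧ i < m))}
    let U : Set V :=
      (⋃ j ∈ {j : Fin (ℓ + 1) | p ≤ j} ∪ J, K j) \ (K p ∩ K (Fin.last ℓ))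
    (2 ≤ U.ncard ∧ U ≠ Set.univ ∧ IsModule G U) ∧
      ∀ v ∈ U, G.neighborSet v \ U = K p ∩ K (Fin.last ℓ) := by
  classical
  intro J U
  obtain ⟨hKinj, hKmax, hKsurj, hKcons⟩ := hK
  obtain ⟨hK'inj, hK'max, hK'surj, hK'cons⟩ := hK'
  have hUdef : ∀ v, v ∈ U ↔
      ((∃ j, (p ≤ j ∨ j ∈ J) ∧ v ∈ K j) ∧ v ∉ K p ∩ K (Fin.last ℓ)) := by
    intro v
    simp only [U, J, Set.mem_diff, Set.mem_iUnion, Set.mem_union, Set.mem_setOf_eq,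
      exists_prop]
  have hJdef : ∀ j, j ∈ J ↔
      ∃ i : Fin (ℓ + 1), K' i = K j ∧ ((m < i ∧ i < e) ∨ (e < i ∧ i < m)) :=
    fun j => Iff.rfl
  have hme : m ≠ e := by
    rcases hside with ⟨_, he⟩ | ⟨_, he⟩ <;> subst he
    · exact hml
    · exact hm0
  have hKplne : K p ≠ K (Fin.last ℓ) := by
    rw [hp, ← hm]
    exact fun h => hme (hK'inj h).symm
  -- every vertex of `K p ∩ K last` is in every clique indexed by `R = {j | p ≤ j} ∪ J`
  have hPall : ∀ x, x ∈ K p ∩ K (Fin.last ℓ) → ∀ j, (p ≤ j ∨ j ∈ J) → x ∈ K j := by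
    rintro x ⟨hxp, hxl⟩ j hj
    rcases hj with hj | hj
    · exact hKcons x p j (Fin.last ℓ) hj (Fin.le_last j) hxp hxl
    · obtain ⟨i, hKi, hbtw⟩ := (hJdef j).1 hj
      rw [← hKi]
      have hxe : x ∈ K' e := by rw [← hp]; exact hxp
      have hxm : x ∈ K' m := by rw [hm]; exact hxl
      rcases hbtw with ⟨h1, h2⟩ | ⟨h1, h2⟩
      · exact hK'cons x m i e h1.le h2.le hxm hxe
      · exact hK'cons x e i m h1.le h2.le hxe hxm
  -- positions not at `m`, not at `e`, not between them are on the far side of `m`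
  have hFar : ∀ i₀ : Fin (ℓ + 1), i₀ ≠ m → i₀ ≠ e →
      ¬((m < i₀ ∧ i₀ < e) ∨ (e < i₀ ∧ i₀ < m)) →
      (i₀ < m ∧ m < e) ∨ (e < m ∧ m < i₀) := by
    intro i₀ h1 h2 h3
    push_neg at h3
    rcases hside with ⟨_, he⟩ | ⟨_, he⟩ <;> subst he
    · left
      have hml' : m < Fin.last ℓ := lt_of_le_of_ne (Fin.le_last m) hml
      have hi₀ : i₀ < Fin.last ℓ := lt_of_le_of_ne (Fin.le_last i₀) h2
      refine ⟨?_, hml'⟩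
      rcases lt_or_ge i₀ m with h | h
      · exact h
      · exact absurd hi₀ (not_lt.2 (h3.1 (lt_of_le_of_ne h (Ne.symm h1))))
    · right
      have hm0' : (0 : Fin (ℓ + 1)) < m := lt_of_le_of_ne (Fin.zero_le m) (Ne.symm hm0)
      have hi₀ : (0 : Fin (ℓ + 1)) < i₀ := lt_of_le_of_ne (Fin.zero_le i₀) (Ne.symm h2)
      refine ⟨hm0', ?_⟩
      rcases lt_or_ge m i₀ with h | h
      · exact h
      · exact absurd (lt_of_le_of_ne h h1) (not_lt.2 (h3.2 hi₀))
  -- core lemma: a vertex in a clique outside `R` and in a clique inside `R` lies in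
  -- `K p ∩ K last`
  have hX : ∀ v (j₀ : Fin (ℓ + 1)), ¬ p ≤ j₀ → j₀ ∉ J → v ∈ K j₀ →
      ∀ j, (p ≤ j ∨ j ∈ J) → v ∈ K j → v ∈ K p ∩ K (Fin.last ℓ) := by
    intro v j₀ hj₀p hj₀J hvj₀ j hj hvj
    obtain ⟨i₀, hi₀⟩ := hK'surj (K j₀) (hKmax j₀)
    have hj₀lt : j₀ < p := not_le.1 hj₀p
    have hi₀m : i₀ ≠ m := by
      rintro rfl
      rw [hm] at hi₀
      exact absurd (hKinj hi₀) (ne_of_gt (lt_of_lt_of_le hj₀lt (Fin.le_last p)))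
    have hi₀e : i₀ ≠ e := by
      rintro rfl
      rw [← hp] at hi₀
      exact hj₀p (le_of_eq (hKinj hi₀))
    have hnb : ¬((m < i₀ ∧ i₀ < e) ∨ (e < i₀ ∧ i₀ < m)) :=
      fun h => hj₀J ((hJdef j₀).2 ⟨i₀, hi₀, h⟩)
    have hvK'i₀ : v ∈ K' i₀ := by rw [hi₀]; exact hvj₀
    rcases hFar i₀ hi₀m hi₀e hnb with ⟨hfar1, hfar2⟩ | ⟨hfar1, hfar2⟩
    · have hvlast : v ∈ K (Fin.last ℓ) := by
        rw [← hm]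
        rcases hj with hj | hj
        · have hvp : v ∈ K p := hKcons v j₀ p j hj₀lt.le hj hvj₀ hvj
          have hve : v ∈ K' e := by rw [← hp]; exact hvp
          exact hK'cons v i₀ m e hfar1.le hfar2.le hvK'i₀ hve
        · obtain ⟨i, hKi, hbtw⟩ := (hJdef j).1 hj
          have hvi : v ∈ K' i := by rw [hKi]; exact hvj
          rcases hbtw with ⟨h1, h2⟩ | ⟨h1, h2⟩
          · exact hK'cons v i₀ m i hfar1.le h1.le hvK'i₀ hvi
          · exact absurd (h1.trans h2) (lt_asymm hfar2)
      exact ⟨hKcons v j₀ p (Fin.last ℓ) hj₀lt.le (Fin.le_last p) hvj₀ hvlast, hvlast⟩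
    · have hvlast : v ∈ K (Fin.last ℓ) := by
        rw [← hm]
        rcases hj with hj | hj
        · have hvp : v ∈ K p := hKcons v j₀ p j hj₀lt.le hj hvj₀ hvj
          have hve : v ∈ K' e := by rw [← hp]; exact hvp
          exact hK'cons v e m i₀ hfar1.le hfar2.le hve hvK'i₀
        · obtain ⟨i, hKi, hbtw⟩ := (hJdef j).1 hj
          have hvi : v ∈ K' i := by rw [hKi]; exact hvj
          rcases hbtw with ⟨h1, h2⟩ | ⟨h1, h2⟩
          · exact absurd (h1.trans h2) (lt_asymm hfar1)
          · exact hK'cons v i m i₀ h2.le hfar2.le hvi hvK'i₀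
      exact ⟨hKcons v j₀ p (Fin.last ℓ) hj₀lt.le (Fin.le_last p) hvj₀ hvlast, hvlast⟩
  -- the main neighborhood identity
  have hmain : ∀ v ∈ U, G.neighborSet v \ U = K p ∩ K (Fin.last ℓ) := by
    intro v hv
    obtain ⟨⟨j, hjR, hvj⟩, hvP⟩ := (hUdef v).1 hv
    ext x
    simp only [Set.mem_diff, SimpleGraph.mem_neighborSet]
    constructor
    · rintro ⟨hadj, hxU⟩
      by_contra hxP
      have hxnot : ∀ j', (p ≤ j' ∨ j' ∈ J) → x ∉ K j' := by
        intro j' hj' hxj'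
        exact hxU ((hUdef x).2 ⟨⟨j', hj', hxj'⟩, hxP⟩)
      have hpair : G.IsClique {v, x} := by
        intro a ha b hb hab
        simp only [Set.mem_insert_iff, Set.mem_singleton_iff] at ha hb
        rcases ha with rfl | rfl <;> rcases hb with rfl | rfl
        · exact absurd rfl hab
        · exact hadj
        · exact hadj.symm
        · exact absurd rfl hab
      obtain ⟨D, hDmax, hD⟩ := exists_maximal_clique G _ hpair
      obtain ⟨j₀, hj₀⟩ := hKsurj D hDmax
      have hvD : v ∈ K j₀ := by rw [hj₀]; exact hD (Set.mem_insert _ _)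
      have hxD : x ∈ K j₀ := by rw [hj₀]; exact hD (Set.mem_insert_of_mem _ rfl)
      have hj₀p : ¬ p ≤ j₀ := fun h => hxnot j₀ (Or.inl h) hxD
      have hj₀J : j₀ ∉ J := fun h => hxnot j₀ (Or.inr h) hxD
      exact hvP (hX v j₀ hj₀p hj₀J hvD j hjR hvj)
    · intro hxP
      refine ⟨?_, fun hxU => ((hUdef x).1 hxU).2 hxP⟩
      have hxj : x ∈ K j := hPall x hxP j hjR
      have hvx : v ≠ x := fun h => hvP (h ▸ hxP)
      exact (hKmax j).1 hvj hxj hvx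
  refine ⟨⟨?_, ?_, ?_⟩, hmain⟩
  · -- 2 ≤ U.ncard
    obtain ⟨a, ha, hap⟩ := Set.not_subset.1
      (fun hsub => hKplne ((hKmax (Fin.last ℓ)).2 (K p) (hKmax p).1 hsub))
    obtain ⟨b, hb, hbl⟩ := Set.not_subset.1
      (fun hsub => hKplne ((hKmax p).2 (K (Fin.last ℓ)) (hKmax (Fin.last ℓ)).1 hsub).symm)
    have haU : a ∈ U := (hUdef a).2
      ⟨⟨Fin.last ℓ, Or.inl (Fin.le_last p), ha⟩, fun h => hap h.1⟩
    have hbU : b ∈ U := (hUdef b).2 ⟨⟨p, Or.inl le_rfl, hb⟩, fun h => hbl h.2⟩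
    have hab : a ≠ b := fun h => hap (h ▸ hb)
    have h1 : 1 < U.ncard :=
      (Set.one_lt_ncard_iff (Set.toFinite U)).2 ⟨a, b, haU, hbU, hab⟩
    exact h1
  · -- U ≠ univ
    have hK0ne : (K 0).Nonempty := by
      by_contra h
      rw [Set.not_nonempty_iff_eq_empty] at h
      have hle : K (Fin.last ℓ) = K 0 :=
        (hKmax 0).2 (K (Fin.last ℓ)) (hKmax (Fin.last ℓ)).1
          (by rw [h]; exact Set.empty_subset _)
      have hl0 : Fin.last ℓ = 0 := hKinj hle
      exact hm0 (le_antisymm (hl0 ▸ Fin.le_last m) (Fin.zero_le m))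
    obtain ⟨v₀, hv₀⟩ := hK0ne
    have hp0 : ¬ p ≤ 0 := by
      intro h
      have hp0' : p = 0 := le_antisymm h (Fin.zero_le p)
      subst hp0'
      have hm₁e : m₁ = e := hK'inj (hm₁.trans hp)
      rcases hside with ⟨h1, he⟩ | ⟨h1, he⟩
      · have h2 : m₁ = Fin.last ℓ := he ▸ hm₁e
        have h3 : m ≤ m₁ := h2.symm ▸ Fin.le_last m
        exact absurd h1 (not_lt.2 h3)
      · have h2 : m₁ = 0 := he ▸ hm₁e
        have h3 : m₁ ≤ m := h2 ▸ Fin.zero_le m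
        exact absurd h1 (not_lt.2 h3)
    have h0J : (0 : Fin (ℓ + 1)) ∉ J := by
      intro h
      obtain ⟨i, hKi, hbtw⟩ := (hJdef 0).1 h
      have hi : i = m₁ := hK'inj (hKi.trans hm₁.symm)
      subst hi
      rcases hside with ⟨h1, he⟩ | ⟨h1, he⟩ <;> subst he
      · rcases hbtw with ⟨h2, _⟩ | ⟨h2, _⟩
        · exact absurd h2 (not_lt.2 h1.le)
        · exact absurd h2 (not_lt.2 (Fin.le_last i))
      · rcases hbtw with ⟨_, h2⟩ | ⟨_, h2⟩
        · exact absurd h2 (not_lt.2 (Fin.zero_le i))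
        · exact absurd h2 (not_lt.2 h1.le)
    intro hUuniv
    have hv₀U : v₀ ∈ U := by rw [hUuniv]; exact Set.mem_univ v₀
    obtain ⟨⟨j, hjR, hvj⟩, hvP⟩ := (hUdef v₀).1 hv₀U
    exact hvP (hX v₀ 0 hp0 h0J hv₀ j hjR hvj)
  · -- IsModule
    intro u hu w hw x hx
    have h1 := hmain u hu
    have h2 := hmain w hw
    constructor
    · intro hadj
      have hx1 : x ∈ G.neighborSet u \ U := ⟨hadj.symm, hx⟩
      have hx2 : x ∈ K p ∩ K (Fin.last ℓ) := h1 ▸ hx1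
      have hx3 : x ∈ G.neighborSet w \ U := h2.symm ▸ hx2
      exact hx3.1.symm
    · intro hadj
      have hx1 : x ∈ G.neighborSet w \ U := ⟨hadj.symm, hx⟩
      have hx2 : x ∈ K p ∩ K (Fin.last ℓ) := h2 ▸ hx1
      have hx3 : x ∈ G.neighborSet u \ U := h1.symm ▸ hx2
      exact hx3.1.symm
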